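/- Let 0 < α < 2 and let ν be a Borel measure on ℝ^d \ {0}. Define ν̃(B) = ∫_0^∞ ν({x : t^{-1/α} x ∈ B}) dt for Borel sets B ⊆ ℝ^d \ {0}. Then ν̃(B) = ∫_{ℝ^d} ∫_0^∞ 1_B( r · x/|x| ) · α r^{−α−1} |x|^α dr dν(x); in particular, for 0 < a < b and a Borel set C ⊆ S, ν̃({rξ : r ∈ (a,b], ξ ∈ C}) = (a^{−α} − b^{−α}) · ∫_{ℝ^d} 1_C(x/|x|) |x|^α dν(x). -/

import Mathlib

open MeasureTheory Filter Set

noncomputable section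

open scoped ENNReal

lemma cov_lemma {E : Type*} [NormedAddCommGroup E] [NormedSpace ℝ E]
    [MeasurableSpace E] [BorelSpace E]
    {α : ℝ} (hα0 : 0 < α) (x : E) (hx : x ≠ 0) (g : E → ℝ≥0∞) :
    ∫⁻ t in Ioi (0:ℝ), g ((t ^ (-(1/α))) • x) =
      ∫⁻ r in Ioi (0:ℝ), ENNReal.ofReal (α * r ^ (-α - 1) * ‖x‖ ^ α) * g (r • (‖x‖⁻¹ • x)) := by
  have hnx : 0 < ‖x‖ := norm_pos_iff.mpr hx
  have hαne : α ≠ 0 := ne_of_gt hα0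
  set f : ℝ → ℝ := fun r => ‖x‖ ^ α * r ^ (-α) with hf
  have hgf : ∀ r ∈ Ioi (0:ℝ), (f r) ^ (-(1/α)) = ‖x‖⁻¹ * r := by
    intro r hr
    have hr0 : (0:ℝ) < r := hr
    rw [hf]
    rw [Real.mul_rpow (by positivity) (by positivity), ← Real.rpow_mul hnx.le,
      ← Real.rpow_mul hr0.le]
    have e1 : α * -(1/α) = -1 := by field_simp
    have e2 : -α * -(1/α) = 1 := by field_simp
    rw [e1, e2, Real.rpow_neg_one, Real.rpow_one]
  have himg : f '' Ioi (0:ℝ) = Ioi (0:ℝ) := by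
    apply Subset.antisymm
    · rintro t ⟨r, hr, rfl⟩
      have hr0 : (0:ℝ) < r := hr
      have : 0 < f r := by rw [hf]; positivity
      exact this
    · intro t ht
      have ht0 : (0:ℝ) < t := ht
      refine ⟨‖x‖ * t ^ (-(1/α)), ?_, ?_⟩
      · have : (0:ℝ) < ‖x‖ * t ^ (-(1/α)) := by positivity
        exact this
      · show ‖x‖ ^ α * (‖x‖ * t ^ (-(1/α))) ^ (-α) = t
        rw [Real.mul_rpow hnx.le (by positivity), ← Real.rpow_mul ht0.le]
        have e2 : -(1/α) * -α = 1 := by field_simp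
        rw [e2, Real.rpow_one, ← mul_assoc, ← Real.rpow_add hnx]
        simp
  have hinj : InjOn f (Ioi (0:ℝ)) := by
    intro r hr r' hr' h
    have h1 := hgf r hr
    have h2 := hgf r' hr'
    rw [h] at h1
    rw [h1] at h2
    field_simp at h2
    exact h2
  have hder : ∀ r ∈ Ioi (0:ℝ), HasDerivAt f (‖x‖ ^ α * (-α * r ^ (-α - 1))) r := by
    intro r hr
    have hr0 : (0:ℝ) < r := hr
    exact (Real.hasDerivAt_rpow_const (p := -α) (Or.inl hr0.ne')).const_mul (‖x‖ ^ α)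
  calc ∫⁻ t in Ioi (0:ℝ), g ((t ^ (-(1/α))) • x)
      = ∫⁻ t in f '' Ioi (0:ℝ), g ((t ^ (-(1/α))) • x) := by rw [himg]
    _ = ∫⁻ r in Ioi (0:ℝ), ENNReal.ofReal |‖x‖ ^ α * (-α * r ^ (-α - 1))| *
          g ((f r ^ (-(1/α))) • x) := by
        simpa only [ContinuousLinearMap.det_toSpanSingleton] using
          lintegral_image_eq_lintegral_abs_det_fderiv_mul volume measurableSet_Ioi
            (fun r hr => ((hder r hr).hasDerivWithinAt).hasFDerivWithinAt) hinj
            (fun t => g ((t ^ (-(1/α))) • x))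
    _ = _ := by
        refine setLIntegral_congr_fun measurableSet_Ioi (fun r hr => ?_)
        have hr0 : (0:ℝ) < r := hr
        have habs : |‖x‖ ^ α * (-α * r ^ (-α - 1))| = α * r ^ (-α - 1) * ‖x‖ ^ α := by
          have : ‖x‖ ^ α * (-α * r ^ (-α - 1)) = -(α * r ^ (-α - 1) * ‖x‖ ^ α) := by ring
          rw [this, abs_neg, abs_of_pos (by positivity)]
        have hpt : (f r ^ (-(1/α))) • x = r • (‖x‖⁻¹ • x) := by
          rw [hgf r hr, smul_smul, mul_comm, ← smul_smul]
        rw [habs, hpt]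

lemma ioc_lintegral {α a b : ℝ} (hα0 : 0 < α) (ha : 0 < a) (hab : a < b) :
    ∫⁻ r in Ioc a b, ENNReal.ofReal (α * r ^ (-α - 1)) =
      ENNReal.ofReal (a ^ (-α) - b ^ (-α)) := by
  have hcont : ContinuousOn (fun r : ℝ => α * r ^ (-α - 1)) (Icc a b) := by
    refine continuousOn_const.mul (ContinuousOn.rpow_const continuousOn_id fun r hr => ?_)
    exact Or.inl (by intro h; rw [h] at hr; exact absurd hr.1 (not_le.mpr ha))
  have hint : IntegrableOn (fun r : ℝ => α * r ^ (-α - 1)) (Ioc a b) :=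
    (hcont.integrableOn_Icc).mono_set Ioc_subset_Icc_self
  rw [← ofReal_integral_eq_lintegral_ofReal hint ?nn]
  case nn =>
    filter_upwards [ae_restrict_mem measurableSet_Ioc] with r hr
    have hr0 : (0:ℝ) < r := lt_trans ha hr.1
    positivity
  congr 1
  rw [← intervalIntegral.integral_of_le hab.le]
  have hFTC : ∀ r ∈ uIcc a b, HasDerivAt (fun r : ℝ => -(r ^ (-α))) (α * r ^ (-α - 1)) r := by
    intro r hr
    rw [uIcc_of_le hab.le] at hr
    have hr0 : (0:ℝ) < r := lt_of_lt_of_le ha hr.1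
    have := (Real.hasDerivAt_rpow_const (p := -α) (Or.inl hr0.ne')).neg
    exact this.congr_deriv (by ring)
  rw [intervalIntegral.integral_eq_sub_of_hasDerivAt hFTC
    (hcont.mono (by rw [uIcc_of_le hab.le])).intervalIntegrable]
  ring

/-- for `0 < α < 2` and a measure `ν` on `ℝ^d \ {0}`, the measure
`ν̃(B) = ∫_0^∞ ν({x : t^{-1/α} x ∈ B}) dt` satisfies
`ν̃(B) = ∫_{ℝ^d} ∫_0^∞ 1_B(r x/|x|) α r^{-α-1} |x|^α dr dν(x)`; in particular, for
`0 < a < b` and Borel `C ⊆ S`,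
`ν̃({rξ : r ∈ (a,b], ξ ∈ C}) = (a^{-α} - b^{-α}) ∫ 1_C(x/|x|) |x|^α dν(x)`. -/
theorem stmt9 {d : ℕ} (α : ℝ) (hα0 : 0 < α) (hα2 : α < 2)
    (ν : Measure (EuclideanSpace ℝ (Fin d))) [SigmaFinite ν]
    (h0 : ν {0} = 0) :
    (∀ B : Set (EuclideanSpace ℝ (Fin d)), MeasurableSet B →
      (0 : EuclideanSpace ℝ (Fin d)) ∉ B →
      (∫⁻ t in Ioi (0:ℝ), ν {x | (t ^ (-(1/α))) • x ∈ B}) =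
        ∫⁻ x, (∫⁻ r in Ioi (0:ℝ),
          B.indicator (fun _ => ENNReal.ofReal (α * r ^ (-α - 1) * ‖x‖ ^ α))
            (r • (‖x‖⁻¹ • x))) ∂ν) ∧
    ∀ (a b : ℝ), 0 < a → a < b →
      ∀ C : Set (EuclideanSpace ℝ (Fin d)),
        C ⊆ Metric.sphere (0 : EuclideanSpace ℝ (Fin d)) 1 → MeasurableSet C →
        (∫⁻ t in Ioi (0:ℝ),
            ν {x | (t ^ (-(1/α))) • x ∈ {y | ∃ r ∈ Ioc a b, ∃ ξ ∈ C, y = r • ξ}}) =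
          ENNReal.ofReal (a ^ (-α) - b ^ (-α)) *
            ∫⁻ x, C.indicator (fun _ => ENNReal.ofReal (‖x‖ ^ α)) (‖x‖⁻¹ • x) ∂ν := by
  have hsm : Measurable fun p : ℝ × EuclideanSpace ℝ (Fin d) => (p.1 ^ (-(1/α))) • p.2 :=
    (measurable_fst.pow_const _).smul measurable_snd
  have key : ∀ B : Set (EuclideanSpace ℝ (Fin d)), MeasurableSet B →
      (0 : EuclideanSpace ℝ (Fin d)) ∉ B →
      (∫⁻ t in Ioi (0:ℝ), ν {x | (t ^ (-(1/α))) • x ∈ B}) =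
        ∫⁻ x, (∫⁻ r in Ioi (0:ℝ),
          B.indicator (fun _ => ENNReal.ofReal (α * r ^ (-α - 1) * ‖x‖ ^ α))
            (r • (‖x‖⁻¹ • x))) ∂ν := by
    intro B hB h0B
    have hmap : ∀ t : ℝ, ν {x | (t ^ (-(1/α))) • x ∈ B} =
        ∫⁻ x, B.indicator (1 : EuclideanSpace ℝ (Fin d) → ENNReal) ((t ^ (-(1/α))) • x) ∂ν := by
      intro t
      rw [show {x : EuclideanSpace ℝ (Fin d) | t ^ (-(1/α)) • x ∈ B} =
        (fun x : EuclideanSpace ℝ (Fin d) => t ^ (-(1/α)) • x) ⁻¹' B from rfl,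
        ← lintegral_indicator_one ((measurable_const_smul (t ^ (-(1/α)))) hB)]
      refine lintegral_congr fun x => ?_
      by_cases h : t ^ (-(1/α)) • x ∈ B
      · rw [Set.indicator_of_mem h,
          Set.indicator_of_mem (show x ∈ (fun x : EuclideanSpace ℝ (Fin d) =>
            t ^ (-(1/α)) • x) ⁻¹' B from h)]
        rfl
      · rw [Set.indicator_of_notMem h,
          Set.indicator_of_notMem (show x ∉ (fun x : EuclideanSpace ℝ (Fin d) =>
            t ^ (-(1/α)) • x) ⁻¹' B from h)]
    rw [lintegral_congr hmap]
    have hunc : Measurable (Function.uncurry fun (t : ℝ) (x : EuclideanSpace ℝ (Fin d)) =>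
        B.indicator (1 : EuclideanSpace ℝ (Fin d) → ENNReal) ((t ^ (-(1/α))) • x)) := by
      exact (measurable_one.indicator hB).comp hsm
    rw [lintegral_lintegral_swap hunc.aemeasurable]
    refine lintegral_congr fun x => ?_
    by_cases hx : x = (0 : EuclideanSpace ℝ (Fin d))
    · subst hx
      simp only [smul_zero, Set.indicator_of_notMem h0B]
    · rw [cov_lemma hα0 x hx (B.indicator 1)]
      refine lintegral_congr fun r => ?_
      by_cases hp : r • (‖x‖⁻¹ • x) ∈ B <;> simp [hp]
  refine ⟨key, ?_⟩
  intro a b ha hab C hCS hC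
  set B : Set (EuclideanSpace ℝ (Fin d)) := {y | ∃ r ∈ Ioc a b, ∃ ξ ∈ C, y = r • ξ} with hBdef
  have hmemB : ∀ y : EuclideanSpace ℝ (Fin d),
      y ∈ B ↔ ‖y‖ ∈ Ioc a b ∧ ‖y‖⁻¹ • y ∈ C := by
    intro y
    constructor
    · rintro ⟨r, hr, ξ, hξ, rfl⟩
      have hr0 : (0:ℝ) < r := lt_trans ha hr.1
      have hξ1 : ‖ξ‖ = 1 := mem_sphere_zero_iff_norm.mp (hCS hξ)
      have hn : ‖r • ξ‖ = r := by
        rw [norm_smul, hξ1, mul_one, Real.norm_eq_abs, abs_of_pos hr0]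
      rw [hn]
      refine ⟨hr, ?_⟩
      rw [smul_smul, inv_mul_cancel₀ hr0.ne', one_smul]
      exact hξ
    · rintro ⟨h1, h2⟩
      have hy0 : (0:ℝ) < ‖y‖ := lt_trans ha h1.1
      exact ⟨‖y‖, h1, ‖y‖⁻¹ • y, h2, by rw [smul_smul, mul_inv_cancel₀ hy0.ne', one_smul]⟩
  have hBeq : B = (fun y : EuclideanSpace ℝ (Fin d) => ‖y‖) ⁻¹' Ioc a b ∩
      (fun y : EuclideanSpace ℝ (Fin d) => ‖y‖⁻¹ • y) ⁻¹' C := by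
    ext y; exact hmemB y
  have hnorm_smul_meas : Measurable fun y : EuclideanSpace ℝ (Fin d) => ‖y‖⁻¹ • y :=
    (measurable_norm.inv).smul measurable_id
  have hBm : MeasurableSet B := by
    rw [hBeq]
    exact (measurable_norm (measurableSet_Ioc)).inter (hnorm_smul_meas hC)
  have h0B : (0 : EuclideanSpace ℝ (Fin d)) ∉ B := by
    rw [hmemB]
    rintro ⟨h1, -⟩
    simp only [norm_zero] at h1
    exact absurd h1.1 (not_lt.mpr ha.le)
  rw [key B hBm h0B]
  have hconst : (ENNReal.ofReal (a ^ (-α) - b ^ (-α))) ≠ ⊤ := ENNReal.ofReal_ne_top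
  rw [← lintegral_const_mul' _ _ hconst]
  refine lintegral_congr fun x => ?_
  by_cases hx : x = (0 : EuclideanSpace ℝ (Fin d))
  · subst hx
    have h0C : (0 : EuclideanSpace ℝ (Fin d)) ∉ C := fun h => by
      simpa using mem_sphere_zero_iff_norm.mp (hCS h)
    simp only [norm_zero, inv_zero, zero_smul, smul_zero, Set.indicator_of_notMem h0B,
      Set.indicator_of_notMem h0C]
    simp
  · have hnx : (0:ℝ) < ‖x‖ := norm_pos_iff.mpr hx
    set u : EuclideanSpace ℝ (Fin d) := ‖x‖⁻¹ • x with hu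
    have hu1 : ‖u‖ = 1 := by
      rw [hu, norm_smul, Real.norm_eq_abs, abs_of_pos (inv_pos.mpr hnx), inv_mul_cancel₀ hnx.ne']
    have hind : ∀ r ∈ Ioi (0:ℝ),
        B.indicator (fun _ => ENNReal.ofReal (α * r ^ (-α - 1) * ‖x‖ ^ α)) (r • u) =
          (Ioc a b).indicator
            (fun r => C.indicator (fun _ => ENNReal.ofReal (α * r ^ (-α - 1) * ‖x‖ ^ α)) u) r := by
      intro r hr
      have hr0 : (0:ℝ) < r := hr
      have hmem : r • u ∈ B ↔ r ∈ Ioc a b ∧ u ∈ C := by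
        rw [hmemB]
        have hn : ‖r • u‖ = r := by
          rw [norm_smul, hu1, mul_one, Real.norm_eq_abs, abs_of_pos hr0]
        rw [hn]
        have : (r : ℝ)⁻¹ • (r • u) = u := by rw [smul_smul, inv_mul_cancel₀ hr0.ne', one_smul]
        rw [this]
      by_cases h1 : r ∈ Ioc a b <;> by_cases h2 : u ∈ C <;>
        simp [Set.indicator_apply, hmem, h1, h2]
    rw [setLIntegral_congr_fun measurableSet_Ioi hind]
    have hIoc : Ioc a b ∩ Ioi (0:ℝ) = Ioc a b :=
      inter_eq_left.mpr fun r hr => lt_trans ha hr.1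
    rw [lintegral_indicator measurableSet_Ioc, Measure.restrict_restrict measurableSet_Ioc, hIoc]
    by_cases h2 : u ∈ C
    · have hcongr : ∀ r ∈ Ioc a b,
          C.indicator (fun _ => ENNReal.ofReal (α * r ^ (-α - 1) * ‖x‖ ^ α)) u =
            ENNReal.ofReal (α * r ^ (-α - 1)) * ENNReal.ofReal (‖x‖ ^ α) := by
        intro r hr
        have hr0 : (0:ℝ) < r := lt_trans ha hr.1
        rw [Set.indicator_of_mem h2, ENNReal.ofReal_mul (by positivity)]
      rw [setLIntegral_congr_fun measurableSet_Ioc hcongr,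
        lintegral_mul_const' _ _ ENNReal.ofReal_ne_top, ioc_lintegral hα0 ha hab,
        Set.indicator_of_mem h2]
    · simp [Set.indicator_of_notMem h2]
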